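/- arXiv:2203.05710 — 5 statements merged into one kernel-verified Lean document; each statement's English description precedes it below -/
import Mathlib

section
/- A linear map Φ : Mₙ(ℂ) → Mₙ(ℂ) is completely positive if and only if its Choi matrix Ch(Φ) = Σ_{i,j} E_{ij} ⊗ Φ(E_{ij}) ∈ Mₙ ⊗ Mₙ is positive semidefinite. -/
open scoped Kronecker ComplexOrder

/-- The amplification `id_{M_k} ⊗ Φ` of a map `Φ : Mₙ(ℂ) → Mₙ(ℂ)`, acting on
`M_k ⊗ Mₙ`, realized as matrices indexed by `Fin k × Fin n`. -/
def ampl {n : ℕ} (Φ : Matrix (Fin n) (Fin n) ℂ → Matrix (Fin n) (Fin n) ℂ)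
    (k : ℕ) (M : Matrix (Fin k × Fin n) (Fin k × Fin n) ℂ) :
    Matrix (Fin k × Fin n) (Fin k × Fin n) ℂ :=
  Matrix.of fun p q => Φ (Matrix.of fun a b => M (p.1, a) (q.1, b)) p.2 q.2

/-- `Φ` is completely positive: every amplification maps positive semidefinite
matrices to positive semidefinite matrices. -/
def IsCP {n : ℕ} (Φ : Matrix (Fin n) (Fin n) ℂ → Matrix (Fin n) (Fin n) ℂ) : Prop :=
  ∀ (k : ℕ) (M : Matrix (Fin k × Fin n) (Fin k × Fin n) ℂ),
    M.PosSemidef → (ampl Φ k M).PosSemidef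

/-- The operator norm of a matrix, viewed as an operator on ℓ²(Fin n). -/
noncomputable def opNorm {n : ℕ} (A : Matrix (Fin n) (Fin n) ℂ) : ℝ :=
  ‖Matrix.toEuclideanCLM (𝕜 := ℂ) A‖

open Matrix

private lemma choi_apply' {n : ℕ} (Φ : Matrix (Fin n) (Fin n) ℂ → Matrix (Fin n) (Fin n) ℂ)
    (i j a b : Fin n) :
    (∑ i' : Fin n, ∑ j' : Fin n,
      Matrix.single i' j' (1 : ℂ) ⊗ₖ Φ (Matrix.single i' j' (1 : ℂ))) (i, a) (j, b)
      = Φ (Matrix.single i j 1) a b := by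
  simp [Matrix.sum_apply, Matrix.single, ite_and]

private lemma phi_expand' {n : ℕ} (Φ : Matrix (Fin n) (Fin n) ℂ → Matrix (Fin n) (Fin n) ℂ)
    (hΦ : IsLinearMap ℂ Φ) (A : Matrix (Fin n) (Fin n) ℂ) :
    Φ A = ∑ i : Fin n, ∑ j : Fin n, A i j • Φ (Matrix.single i j 1) := by
  let L := IsLinearMap.mk' Φ hΦ
  have hL : Φ = L := rfl
  rw [hL]
  conv_lhs => rw [matrix_eq_sum_single A]
  rw [map_sum]
  refine Finset.sum_congr rfl fun i _ => ?_
  rw [map_sum]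
  refine Finset.sum_congr rfl fun j _ => ?_
  have : single i j (A i j) = A i j • single i j (1:ℂ) := by
    rw [smul_single, smul_eq_mul, mul_one]
  rw [this, _root_.map_smul]

/-- A linear map Φ : Mₙ(ℂ) → Mₙ(ℂ) is completely positive iff its Choi matrix
Σ_{i,j} E_{ij} ⊗ Φ(E_{ij}) is positive semidefinite. -/
theorem cp_iff_choi_posSemidef {n : ℕ}
    (Φ : Matrix (Fin n) (Fin n) ℂ → Matrix (Fin n) (Fin n) ℂ)
    (hΦ : IsLinearMap ℂ Φ) :
    IsCP Φ ↔
      (∑ i : Fin n, ∑ j : Fin n,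
        Matrix.single i j (1 : ℂ) ⊗ₖ Φ (Matrix.single i j (1 : ℂ))).PosSemidef := by
  classical
  constructor
  · -- forward: apply CP to the maximally entangled projector
    intro hCP
    set v : Fin n × Fin n → ℂ := fun u => if u.1 = u.2 then 1 else 0 with hv
    have hvstar : star v = v := by
      funext u
      simp only [Pi.star_apply, hv]
      split_ifs <;> simp
    have hM0 : (Matrix.vecMulVec v (star v)).PosSemidef := by
      rw [Matrix.posSemidef_iff_dotProduct_mulVec]
      constructor
      · rw [Matrix.IsHermitian]
        ext u w
        simp only [Matrix.conjTranspose_apply, Matrix.vecMulVec_apply, hvstar, star_mul', hv]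
        split_ifs <;> simp_all
      · intro x
        have h1 : (Matrix.vecMulVec v (star v)) *ᵥ x = (star v ⬝ᵥ x) • v := by
          ext u
          simp only [Matrix.mulVec, dotProduct, Matrix.vecMulVec_apply, Pi.smul_apply,
            smul_eq_mul]
          rw [Finset.sum_mul]
          exact Finset.sum_congr rfl fun w _ => by ring
        rw [h1]
        rw [dotProduct_smul]
        rw [smul_eq_mul]
        rw [Matrix.star_dotProduct x v]
        exact mul_star_self_nonneg _
    have key : (∑ i : Fin n, ∑ j : Fin n,
        Matrix.single i j (1 : ℂ) ⊗ₖ Φ (Matrix.single i j (1 : ℂ)))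
        = ampl Φ n (Matrix.vecMulVec v (star v)) := by
      ext ⟨i, a⟩ ⟨j, b⟩
      rw [choi_apply']
      show _ = Φ (Matrix.of fun s t => Matrix.vecMulVec v (star v) (i, s) (j, t)) a b
      congr 1
      ext s t
      simp only [Matrix.of_apply, Matrix.vecMulVec_apply, hvstar, hv, Matrix.single]
      split_ifs <;> simp_all
    rw [key]
    exact hCP n _ hM0
  · -- backward: Kraus decomposition from the Choi matrix
    intro hC
    obtain ⟨D, hD⟩ : ∃ D : Matrix (Fin n × Fin n) (Fin n × Fin n) ℂ, _ = Dᴴ * D := by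
      open scoped MatrixOrder Matrix.Norms.L2Operator in
      exact CStarAlgebra.nonneg_iff_eq_star_mul_self.mp hC.nonneg
    set K : (Fin n × Fin n) → Matrix (Fin n) (Fin n) ℂ :=
      fun r => Matrix.of fun a i => star (D r (i, a)) with hK
    have kraus_basis : ∀ i j : Fin n, Φ (Matrix.single i j 1)
        = ∑ r : Fin n × Fin n, K r * Matrix.single i j 1 * (K r)ᴴ := by
      intro i j
      ext a b
      have h1 : Φ (Matrix.single i j 1) a b = (Dᴴ * D) (i, a) (j, b) := by
        rw [← hD, ← choi_apply' Φ i j a b]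
      rw [h1]
      simp only [Matrix.sum_apply, Matrix.mul_apply, Matrix.conjTranspose_apply,
        Matrix.single, Matrix.of_apply, hK, ite_and, mul_ite, ite_mul, mul_zero,
        zero_mul, mul_one, Finset.sum_ite_eq, Finset.sum_ite_eq', Finset.mem_univ, if_true,
        star_star]
    have kraus : ∀ A, Φ A = ∑ r : Fin n × Fin n, K r * A * (K r)ᴴ := by
      intro A
      rw [phi_expand' Φ hΦ A]
      simp_rw [kraus_basis, Finset.smul_sum]
      have hswap : (∑ i : Fin n, ∑ j : Fin n, ∑ r : Fin n × Fin n,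
          A i j • (K r * Matrix.single i j 1 * (K r)ᴴ))
          = ∑ r : Fin n × Fin n, ∑ i : Fin n, ∑ j : Fin n,
          A i j • (K r * Matrix.single i j 1 * (K r)ᴴ) :=
        calc (∑ i : Fin n, ∑ j : Fin n, ∑ r : Fin n × Fin n,
              A i j • (K r * Matrix.single i j 1 * (K r)ᴴ))
            = ∑ i : Fin n, ∑ r : Fin n × Fin n, ∑ j : Fin n,
              A i j • (K r * Matrix.single i j 1 * (K r)ᴴ) :=
              Finset.sum_congr rfl fun i _ => Finset.sum_comm
          _ = ∑ r : Fin n × Fin n, ∑ i : Fin n, ∑ j : Fin n,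
              A i j • (K r * Matrix.single i j 1 * (K r)ᴴ) := Finset.sum_comm
      rw [hswap]
      refine Finset.sum_congr rfl fun r _ => ?_
      conv_rhs => rw [matrix_eq_sum_single A]
      simp_rw [Finset.mul_sum, Finset.sum_mul]
      refine Finset.sum_congr rfl fun i _ => Finset.sum_congr rfl fun j _ => ?_
      have h2 : Matrix.single i j (A i j) = A i j • Matrix.single i j (1:ℂ) := by
        rw [smul_single, smul_eq_mul, mul_one]
      rw [h2, mul_smul_comm, smul_mul_assoc]
    intro k M hM
    have key : ampl Φ k M = ∑ r : Fin n × Fin n,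
        ((1 : Matrix (Fin k) (Fin k) ℂ) ⊗ₖ K r) * M * ((1 : Matrix (Fin k) (Fin k) ℂ) ⊗ₖ K r)ᴴ := by
      ext ⟨p, a⟩ ⟨q, b⟩
      show Φ (Matrix.of fun s t => M (p, s) (q, t)) a b = _
      rw [kraus]
      simp only [Matrix.sum_apply]
      refine Finset.sum_congr rfl fun r _ => ?_
      simp only [Matrix.mul_apply, Matrix.conjTranspose_apply, Matrix.kroneckerMap_apply,
        Matrix.of_apply, Fintype.sum_prod_type, Matrix.one_apply, ite_mul, mul_ite,
        one_mul, zero_mul, mul_zero, mul_one, star_mul', star_one, star_zero,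
        Finset.sum_ite_eq, Finset.sum_ite_eq', Finset.mem_univ, if_true,
        apply_ite (star : ℂ → ℂ), Finset.sum_ite_irrel, Finset.sum_const_zero]
    rw [key]
    refine Finset.sum_induction _ _ (fun a b ha hb => ha.add hb) Matrix.PosSemidef.zero ?_
    intro r _
    exact hM.mul_mul_conjTranspose_same _
end

section
/- Let X₀ ⊂ X and Y₀ ⊂ Y be inclusions of operator spaces, and let α be a reasonable operator space tensor norm. If u : X → X₀ and v : Y → Y₀ are completely bounded with ‖u‖_cb = ‖v‖_cb = 1, ‖u − λ·id_X‖_cb ≤ 1 − λ and ‖v − μ·id_Y‖_cb ≤ 1 − μ for some λ, μ ∈ [0,1], then ‖u ⊗ v − λμ·id_{X⊗Y}‖_cb ≤ 1 − λμ on X ⊗_α Y. Consequently Ind_CB(X ⊗_α Y : X₀ ⊗_rel Y₀) ≤ Ind_CB(X : X₀)·Ind_CB(Y : Y₀). -/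
/-- Abstract form of the key norm inequality for the CB-index under a reasonable
operator space tensor norm: if `T` is the (bilinear) tensoring of operators on
`X` and `Y` into operators on `Z = X ⊗_α Y`, satisfying `‖T u v‖ = ‖u‖‖v‖`
(a "reasonable" tensor norm) and `T id id = id`, and if `‖u‖ = ‖v‖ = 1`,
`‖u − λ·id‖ ≤ 1 − λ`, `‖v − μ·id‖ ≤ 1 − μ` with `λ, μ ∈ [0,1]`, then
`‖T u v − λμ·id‖ ≤ 1 − λμ`.  (Consequently
`Ind_CB(X ⊗_α Y : X₀ ⊗_rel Y₀) ≤ Ind_CB(X : X₀)·Ind_CB(Y : Y₀)`.) -/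
theorem cb_index_submultiplicative_norm_ineq
    {X Y Z : Type*}
    [NormedAddCommGroup X] [NormedSpace ℂ X]
    [NormedAddCommGroup Y] [NormedSpace ℂ Y]
    [NormedAddCommGroup Z] [NormedSpace ℂ Z]
    (T : (X →L[ℂ] X) →ₗ[ℂ] (Y →L[ℂ] Y) →ₗ[ℂ] (Z →L[ℂ] Z))
    (hreasonable : ∀ (u : X →L[ℂ] X) (v : Y →L[ℂ] Y), ‖T u v‖ = ‖u‖ * ‖v‖)
    (hid : T (ContinuousLinearMap.id ℂ X) (ContinuousLinearMap.id ℂ Y) =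
      ContinuousLinearMap.id ℂ Z)
    (u : X →L[ℂ] X) (v : Y →L[ℂ] Y) (l m : ℝ)
    (hl : l ∈ Set.Icc (0 : ℝ) 1) (hm : m ∈ Set.Icc (0 : ℝ) 1)
    (hu : ‖u‖ = 1) (hv : ‖v‖ = 1)
    (hul : ‖u - (l : ℂ) • ContinuousLinearMap.id ℂ X‖ ≤ 1 - l)
    (hvm : ‖v - (m : ℂ) • ContinuousLinearMap.id ℂ Y‖ ≤ 1 - m) :
    ‖T u v - ((l * m : ℝ) : ℂ) • ContinuousLinearMap.id ℂ Z‖ ≤ 1 - l * m := by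
  obtain ⟨hl0, hl1⟩ := hl
  obtain ⟨hm0, hm1⟩ := hm
  have key : T u v - ((l * m : ℝ) : ℂ) • ContinuousLinearMap.id ℂ Z
      = T (u - (l : ℂ) • ContinuousLinearMap.id ℂ X) v
        + (l : ℂ) • T (ContinuousLinearMap.id ℂ X)
            (v - (m : ℂ) • ContinuousLinearMap.id ℂ Y) := by
    simp only [map_sub, map_smul, LinearMap.sub_apply, LinearMap.smul_apply,
      smul_sub, hid, smul_smul]
    push_cast
    abel
  rw [key]
  calc ‖T (u - (l : ℂ) • ContinuousLinearMap.id ℂ X) v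
        + (l : ℂ) • T (ContinuousLinearMap.id ℂ X)
            (v - (m : ℂ) • ContinuousLinearMap.id ℂ Y)‖
      ≤ ‖T (u - (l : ℂ) • ContinuousLinearMap.id ℂ X) v‖
        + ‖(l : ℂ) • T (ContinuousLinearMap.id ℂ X)
            (v - (m : ℂ) • ContinuousLinearMap.id ℂ Y)‖ := norm_add_le _ _
    _ ≤ (1 - l) + l * (1 - m) := by
        gcongr
        · rw [hreasonable, hv, mul_one]; exact hul
        · refine le_trans (ContinuousLinearMap.opNorm_smul_le _ _) ?_
          rw [hreasonable]
          have h1 : ‖ContinuousLinearMap.id ℂ X‖ ≤ 1 := ContinuousLinearMap.norm_id_le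
          have h2 : ‖(l : ℂ)‖ = l := by
            simp [Complex.norm_real, abs_of_nonneg hl0]
          rw [h2]
          have := norm_nonneg (v - (m : ℂ) • ContinuousLinearMap.id ℂ Y)
          calc l * (‖ContinuousLinearMap.id ℂ X‖ *
                ‖v - (m : ℂ) • ContinuousLinearMap.id ℂ Y‖)
              ≤ l * (1 * (1 - m)) := by
                have hm' : (0:ℝ) ≤ 1 - m := by linarith
                gcongr
            _ = l * (1 - m) := by ring
    _ = 1 - l * m + (- l * m + l * m) := by ring
    _ ≤ 1 - l * m := by nlinarith
end

section
/- For the inclusion ℂ·1ₙ ⊂ ℓ∞(n) of Banach spaces (constant sequences in the sup-norm space), the bounded index equals n: Ind_B(ℓ∞(n) : ℂ1ₙ) = n. -/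
open Finset

noncomputable def csgn (z : ℂ) : ℂ := if z = 0 then 1 else (starRingEnd ℂ) z / ‖z‖

lemma csgn_norm (z : ℂ) : ‖csgn z‖ = 1 := by
  unfold csgn
  split_ifs with h
  · simp
  · simp [norm_div, h, norm_ne_zero_iff]

lemma mul_csgn (z : ℂ) : z * csgn z = (‖z‖ : ℂ) := by
  unfold csgn
  split_ifs with h
  · simp [h]
  · rw [mul_div_assoc', Complex.mul_conj]
    rw [Complex.normSq_eq_norm_sq]
    have : ((‖z‖ : ℝ) : ℂ) ≠ 0 := by
      simpa using h
    field_simp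
    push_cast
    ring

/-- For the inclusion ℂ·1ₙ ⊂ ℓ∞(n) (constant vectors inside ℂⁿ with the sup
norm), the bounded index equals n: the infimum of ‖T‖ over bounded linear maps
T : ℓ∞(n) → ℂ·1ₙ with ‖T − id‖ ≤ ‖T‖ − 1 is exactly n, and it is attained. -/
theorem bounded_index_linfty_constants (n : ℕ) (hn : 0 < n) :
    IsLeast {r : ℝ | ∃ T : (Fin n → ℂ) →L[ℂ] (Fin n → ℂ),
        (∀ (x : Fin n → ℂ) (j k : Fin n), T x j = T x k) ∧
        ‖T - ContinuousLinearMap.id ℂ (Fin n → ℂ)‖ ≤ ‖T‖ - 1 ∧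
        r = ‖T‖} (n : ℝ) := by
  haveI : Nonempty (Fin n) := Fin.pos_iff_nonempty.mp hn
  have hn1 : (1:ℝ) ≤ n := by exact_mod_cast hn
  constructor
  · -- membership: averaging map scaled by n
    set L : (Fin n → ℂ) →ₗ[ℂ] (Fin n → ℂ) :=
      { toFun := fun x _ => ∑ i, x i
        map_add' := by intro x y; funext j; simp [Finset.sum_add_distrib]
        map_smul' := by intro c x; funext j; simp [Finset.mul_sum] } with hL
    set T := LinearMap.toContinuousLinearMap L with hTdef
    have hTx : ∀ (x : Fin n → ℂ) (j : Fin n), T x j = ∑ i, x i := fun x j => rfl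
    have key : ∀ x : Fin n → ℂ, ‖T x‖ ≤ (n:ℝ) * ‖x‖ := by
      intro x
      rw [pi_norm_le_iff_of_nonneg (mul_nonneg (Nat.cast_nonneg n) (norm_nonneg x))]
      intro j
      rw [hTx]
      calc ‖∑ i, x i‖ ≤ ∑ i : Fin n, ‖x i‖ := norm_sum_le _ _
        _ ≤ ∑ _i : Fin n, ‖x‖ := Finset.sum_le_sum fun i _ => norm_le_pi_norm x i
        _ = (n:ℝ) * ‖x‖ := by simp [Finset.sum_const, mul_comm]
    have hTn : ‖T‖ = n := by
      apply le_antisymm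
      · exact T.opNorm_le_bound (Nat.cast_nonneg n) key
      · have h1 : T (1 : Fin n → ℂ) = fun _ => (n : ℂ) := by
          funext j; rw [hTx]; simp
        have h2 : ‖T (1 : Fin n → ℂ)‖ = n := by
          rw [h1]
          have : ‖(fun _ : Fin n => (n:ℂ))‖ = ‖(n:ℂ)‖ := pi_norm_const _
          rw [this]; simp
        calc (n:ℝ) = ‖T (1 : Fin n → ℂ)‖ := h2.symm
          _ ≤ ‖T‖ * ‖(1 : Fin n → ℂ)‖ := T.le_opNorm 1
          _ = ‖T‖ := by rw [norm_one, mul_one]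
    refine ⟨T, fun x j k => by rw [hTx, hTx], ?_, hTn.symm⟩
    rw [hTn]
    apply ContinuousLinearMap.opNorm_le_bound _ (by linarith)
    intro x
    rw [pi_norm_le_iff_of_nonneg (mul_nonneg (by linarith) (norm_nonneg x))]
    intro j
    have : (T - ContinuousLinearMap.id ℂ (Fin n → ℂ)) x j = ∑ i ∈ univ.erase j, x i := by
      simp only [ContinuousLinearMap.sub_apply, ContinuousLinearMap.id_apply, Pi.sub_apply]
      rw [hTx]
      rw [← Finset.sum_erase_add univ x (mem_univ j)]
      ring
    rw [this]
    calc ‖∑ i ∈ univ.erase j, x i‖ ≤ ∑ i ∈ univ.erase j, ‖x i‖ := norm_sum_le _ _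
      _ ≤ ∑ _i ∈ univ.erase j, ‖x‖ := Finset.sum_le_sum fun i _ => norm_le_pi_norm x i
      _ = ((n:ℝ) - 1) * ‖x‖ := by
          rw [Finset.sum_const, Finset.card_erase_of_mem (mem_univ j), card_univ]
          simp only [Fintype.card_fin, nsmul_eq_mul]
          rw [Nat.cast_sub hn]
          simp
  · rintro r ⟨T, hconst, hcond, rfl⟩
    set j₀ : Fin n := Classical.arbitrary (Fin n) with hj₀
    set a : Fin n → ℂ := fun i => T (fun j => if i = j then 1 else 0) j₀ with ha
    have hTx0 : ∀ x : Fin n → ℂ, T x j₀ = ∑ i, x i * a i := by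
      intro x
      conv_lhs => rw [pi_eq_sum_univ x]
      rw [map_sum, Finset.sum_apply]
      simp [ha, smul_eq_mul]
    have hD0 : (0:ℝ) ≤ ‖T‖ - 1 :=
      le_trans (norm_nonneg (T - ContinuousLinearMap.id ℂ (Fin n → ℂ))) hcond
    have hTle : ‖T‖ ≤ ∑ i, ‖a i‖ := by
      apply T.opNorm_le_bound (Finset.sum_nonneg fun i _ => norm_nonneg _)
      intro x
      rw [pi_norm_le_iff_of_nonneg
        (mul_nonneg (Finset.sum_nonneg fun i _ => norm_nonneg _) (norm_nonneg x))]
      intro j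
      rw [hconst x j j₀, hTx0]
      calc ‖∑ i, x i * a i‖ ≤ ∑ i, ‖x i * a i‖ := norm_sum_le _ _
        _ ≤ ∑ i, ‖x‖ * ‖a i‖ := Finset.sum_le_sum fun i _ => by
              rw [norm_mul]
              exact mul_le_mul_of_nonneg_right (norm_le_pi_norm x i) (norm_nonneg _)
        _ = (∑ i, ‖a i‖) * ‖x‖ := by rw [← Finset.mul_sum]; ring
    have haj : ∀ j, ‖a j - 1‖ ≤ ‖a j‖ - 1 := by
      intro j
      set x : Fin n → ℂ := fun i => if i = j then csgn (a j - 1) else csgn (a i) with hx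
      have hxnorm : ‖x‖ ≤ 1 := by
        rw [pi_norm_le_iff_of_nonneg zero_le_one]
        intro i
        by_cases h : i = j
        · rw [hx]; simp only [if_pos h]; exact le_of_eq (csgn_norm _)
        · rw [hx]; simp only [if_neg h]; exact le_of_eq (csgn_norm _)
      have hval : T x j₀ - x j
          = (((∑ i ∈ univ.erase j, ‖a i‖) + ‖a j - 1‖ : ℝ) : ℂ) := by
        rw [hTx0]
        rw [← Finset.sum_erase_add univ _ (mem_univ j)]
        have h1 : ∑ i ∈ univ.erase j, x i * a i
            = ∑ i ∈ univ.erase j, ((‖a i‖ : ℝ) : ℂ) := by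
          apply Finset.sum_congr rfl
          intro i hi
          have hij : i ≠ j := Finset.ne_of_mem_erase hi
          simp only [hx, if_neg hij]
          rw [mul_comm, mul_csgn]
        have h2 : x j = csgn (a j - 1) := by simp [hx]
        rw [h1, h2]
        have h3 : csgn (a j - 1) * a j - csgn (a j - 1)
            = ((‖a j - 1‖ : ℝ) : ℂ) := by
          rw [← mul_csgn (a j - 1)]; ring
        push_cast
        rw [add_sub_assoc, h3]
      have hb : ‖T x j₀ - x j‖ ≤ ‖T‖ - 1 := by
        rw [hconst x j₀ j]
        have hrw : T x j - x j
            = (T - ContinuousLinearMap.id ℂ (Fin n → ℂ)) x j := by simp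
        rw [hrw]
        calc ‖(T - ContinuousLinearMap.id ℂ (Fin n → ℂ)) x j‖
            ≤ ‖(T - ContinuousLinearMap.id ℂ (Fin n → ℂ)) x‖ := norm_le_pi_norm _ j
          _ ≤ ‖T - ContinuousLinearMap.id ℂ (Fin n → ℂ)‖ * ‖x‖ :=
              ContinuousLinearMap.le_opNorm _ x
          _ ≤ (‖T‖ - 1) * 1 :=
              mul_le_mul hcond hxnorm (norm_nonneg x) hD0
          _ = ‖T‖ - 1 := mul_one _
      have hnv : ‖T x j₀ - x j‖ = (∑ i ∈ univ.erase j, ‖a i‖) + ‖a j - 1‖ := by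
        rw [hval, Complex.norm_real]
        exact abs_of_nonneg (by positivity)
      have hsplit : ∑ i, ‖a i‖ = (∑ i ∈ univ.erase j, ‖a i‖) + ‖a j‖ :=
        (Finset.sum_erase_add univ _ (mem_univ j)).symm
      rw [hnv] at hb
      linarith
    have hre : ∀ j, 1 ≤ (a j).re := by
      intro j
      have h1 := haj j
      have h0 : (0:ℝ) ≤ ‖a j - 1‖ := norm_nonneg _
      have e1 : ‖a j‖^2 = (a j).re^2 + (a j).im^2 := by
        rw [Complex.sq_norm, Complex.normSq_apply]; ring
      have e2 : ‖a j - 1‖^2 = ((a j).re - 1)^2 + (a j).im^2 := by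
        rw [Complex.sq_norm, Complex.normSq_apply]
        simp [Complex.sub_re, Complex.sub_im]
        ring
      nlinarith [pow_le_pow_left₀ h0 h1 2, norm_nonneg (a j)]
    have hfin : (n:ℝ) ≤ (T 1 j₀).re := by
      rw [hTx0]
      simp only [Pi.one_apply, one_mul]
      rw [Complex.re_sum]
      calc (n:ℝ) = ∑ _i : Fin n, (1:ℝ) := by simp
        _ ≤ ∑ i, (a i).re := Finset.sum_le_sum fun i _ => hre i
    have hup : (T 1 j₀).re ≤ ‖T‖ := by
      calc (T 1 j₀).re ≤ ‖T 1 j₀‖ := Complex.re_le_norm _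
        _ ≤ ‖T 1‖ := norm_le_pi_norm _ j₀
        _ ≤ ‖T‖ * ‖(1 : Fin n → ℂ)‖ := T.le_opNorm 1
        _ = ‖T‖ := by rw [norm_one, mul_one]
    linarith
end

section
/- For a graph Γ on n vertices with associated matricial system 𝒮_Γ = {X ∈ Mₙ : X_{ij} = 0 whenever i ≁ j} (where i ∼ j iff i = j or (i,j) ∈ E), the CP-index satisfies Ind_CP(Mₙ : 𝒮_Γ) ≤ ϑ(Γ), where ϑ(Γ) = min{max_i B_{ii} : B ∈ 𝒮_Γ, B − Jₙ positive semidefinite} is the Lovász theta number. -/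
open scoped Kronecker ComplexOrder

/-- The matricial operator system 𝒮_Γ ⊂ Mₙ of a graph Γ: matrices supported on
the adjacency pattern (with i ∼ j iff i = j or (i,j) ∈ E). -/
def graphSystem {n : ℕ} (G : SimpleGraph (Fin n)) : Set (Matrix (Fin n) (Fin n) ℂ) :=
  {X | ∀ i j : Fin n, ¬(i = j ∨ G.Adj i j) → X i j = 0}

/-- The all-ones matrix Jₙ. -/
def Jmat (n : ℕ) : Matrix (Fin n) (Fin n) ℂ := Matrix.of fun _ _ => 1

/-- The Lovász theta number ϑ(Γ) = min{max_i B_{ii} : B ∈ 𝒮_Γ, B − Jₙ ⪰ 0}. -/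
noncomputable def lovaszTheta {n : ℕ} (G : SimpleGraph (Fin n)) : ℝ :=
  sInf {r : ℝ | ∃ B ∈ graphSystem G, (B - Jmat n).PosSemidef ∧ r = ⨆ i : Fin n, (B i i).re}

/-- The CP-index Ind_CP(Mₙ : 𝒮) of a subsystem 𝒮 ⊆ Mₙ. -/
noncomputable def indCPMn {n : ℕ} (S : Set (Matrix (Fin n) (Fin n) ℂ)) : ℝ :=
  sInf {r : ℝ | ∃ Φ : Matrix (Fin n) (Fin n) ℂ → Matrix (Fin n) (Fin n) ℂ,
    IsLinearMap ℂ Φ ∧ IsCP Φ ∧ (∀ X, Φ X ∈ S) ∧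
    (∃ c : ℂ, Φ (1 : Matrix (Fin n) (Fin n) ℂ) = c • (1 : Matrix (Fin n) (Fin n) ℂ)) ∧
    IsCP (fun X => Φ X - X) ∧
    r = opNorm (Φ (1 : Matrix (Fin n) (Fin n) ℂ))}

open Matrix

set_option synthInstance.maxHeartbeats 1000000
set_option maxHeartbeats 1000000

/-- A finite sum of positive semidefinite matrices is positive semidefinite. -/
lemma posSemidef_sum' {ι m : Type*} [Fintype ι] [Fintype m]
    (f : ι → Matrix m m ℂ) (h : ∀ t, (f t).PosSemidef) : (∑ t, f t).PosSemidef :=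
  Finset.sum_induction f Matrix.PosSemidef (fun _ _ ha hb => ha.add hb)
    Matrix.PosSemidef.zero (fun t _ => h t)

/-- Schur product theorem, in the form needed here: the Schur multiplier by a
positive semidefinite matrix is completely positive. -/
lemma isCP_schurMul {n : ℕ} {C : Matrix (Fin n) (Fin n) ℂ} (hC : C.PosSemidef) :
    IsCP (fun X => Matrix.of fun i j => C i j * X i j) := by
  intro k M hM
  obtain ⟨A, rfl⟩ : ∃ A : Matrix (Fin n) (Fin n) ℂ, C = Aᴴ * A := by
    open scoped MatrixOrder in
    obtain ⟨B, hB⟩ := CStarAlgebra.nonneg_iff_eq_star_mul_self.mp hC.nonneg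
    exact ⟨B, hB⟩
  have key : ampl (fun X => Matrix.of fun i j => (Aᴴ * A) i j * X i j) k M
      = ∑ t : Fin n, (Matrix.diagonal fun q : Fin k × Fin n => A t q.2)ᴴ * M *
          (Matrix.diagonal fun q : Fin k × Fin n => A t q.2) := by
    ext p q
    simp only [ampl, Matrix.of_apply, Matrix.sum_apply, Matrix.diagonal_conjTranspose,
      Matrix.mul_diagonal, Matrix.diagonal_mul, Pi.star_apply]
    rw [Matrix.mul_apply, Finset.sum_mul]
    exact Finset.sum_congr rfl fun t _ => by
      rw [Matrix.conjTranspose_apply]; ring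
  rw [key]
  exact posSemidef_sum' _ fun t => hM.conjTranspose_mul_mul_same _

lemma posSemidef_Jmat (n : ℕ) : (Jmat n).PosSemidef := by
  refine Matrix.PosSemidef.of_dotProduct_mulVec_nonneg ?_ ?_
  · ext i j
    simp [Jmat, Matrix.conjTranspose_apply]
  · intro x
    have h : star x ⬝ᵥ Jmat n *ᵥ x = star (∑ i, x i) * ∑ i, x i := by
      simp only [dotProduct, Matrix.mulVec, Jmat, Matrix.of_apply, one_mul,
        Pi.star_apply, star_sum]
      rw [Finset.sum_mul]
    rw [h]
    exact star_mul_self_nonneg _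

lemma Jmat_mul_Jmat (n : ℕ) : Jmat n * Jmat n = (n : ℂ) • Jmat n := by
  ext i j
  simp [Jmat, Matrix.mul_apply]

/-- `n•1 - J` is positive semidefinite. -/
lemma posSemidef_nOne_sub_Jmat (n : ℕ) :
    ((n : ℂ) • (1 : Matrix (Fin n) (Fin n) ℂ) - Jmat n).PosSemidef := by
  rcases Nat.eq_zero_or_pos n with h | hn
  · subst h
    constructor
    · ext i j; exact absurd i.2 (by simp)
    · intro x
      have : x = 0 := Finsupp.ext fun i => absurd i.2 (by simp)
      simp [this]
  set K : Matrix (Fin n) (Fin n) ℂ := (n : ℂ) • (1 : Matrix (Fin n) (Fin n) ℂ) - Jmat n with hK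
  have hKH : Kᴴ = K := by
    rw [hK, Matrix.conjTranspose_sub, Matrix.conjTranspose_smul, Matrix.conjTranspose_one]
    congr 1
    · simp
    · ext i j; simp [Jmat, Matrix.conjTranspose_apply]
  have hJK : Jmat n * K = 0 := by
    rw [hK, Matrix.mul_sub, Matrix.mul_smul, Matrix.mul_one, Jmat_mul_Jmat, sub_self]
  have hKK : K * K = (n : ℂ) • K := by
    nth_rewrite 1 [hK]
    rw [Matrix.sub_mul, Matrix.smul_mul, Matrix.one_mul, hJK, sub_zero]
  set c : ℂ := ((Real.sqrt n : ℝ) : ℂ)⁻¹ with hc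
  have hstar : star c = c := by
    simp [hc, Complex.star_def, map_inv₀, Complex.conj_ofReal]
  have hcc : c * c * (n : ℂ) = 1 := by
    rw [hc, ← mul_inv, ← Complex.ofReal_mul, Real.mul_self_sqrt (Nat.cast_nonneg n)]
    push_cast
    exact inv_mul_cancel₀ (by exact_mod_cast hn.ne')
  have hfact : (c • K)ᴴ * (c • K) = K := by
    rw [Matrix.conjTranspose_smul, hKH, hstar, Matrix.smul_mul, Matrix.mul_smul, hKK,
      smul_smul, smul_smul, hcc, one_smul]
  rw [← hfact]
  exact Matrix.posSemidef_conjTranspose_mul_self _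

/-- For a graph Γ on n vertices, Ind_CP(Mₙ : 𝒮_Γ) ≤ ϑ(Γ). -/
theorem indCP_le_lovaszTheta {n : ℕ} (hn : 0 < n) (G : SimpleGraph (Fin n)) :
    indCPMn (graphSystem G) ≤ lovaszTheta G := by
  haveI : Nonempty (Fin n) := Fin.pos_iff_nonempty.mp hn
  apply csInf_le_csInf
  · -- CP set is bounded below by 0
    exact ⟨0, fun r hr => by
      obtain ⟨Φ, -, -, -, -, -, hr⟩ := hr
      rw [hr]; exact norm_nonneg _⟩
  · -- theta set is nonempty: B = n • 1
    refine ⟨(n : ℝ), (n : ℂ) • 1, ?_, ?_, ?_⟩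
    · intro i j hij
      have : i ≠ j := fun h => hij (Or.inl h)
      simp [Matrix.one_apply_ne this]
    · exact posSemidef_nOne_sub_Jmat n
    · have : (fun i : Fin n => (((n : ℂ) • (1 : Matrix (Fin n) (Fin n) ℂ)) i i).re)
          = fun _ : Fin n => (n : ℝ) := by
        funext i; simp
      rw [show (⨆ i : Fin n, (((n : ℂ) • (1 : Matrix (Fin n) (Fin n) ℂ)) i i).re)
          = ⨆ _ : Fin n, (n : ℝ) from by rw [this], ciSup_const]
  · -- theta set ⊆ CP set
    rintro r ⟨B, hB, hPSD, hr⟩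
    -- diagonal facts
    have hdiag : ∀ i : Fin n, (B i i).im = 0 ∧ 1 ≤ (B i i).re := by
      intro i
      have h0 : 0 ≤ (B - Jmat n) i i := by
        have := hPSD.dotProduct_mulVec_nonneg (Pi.single i 1)
        simpa [dotProduct, Matrix.mulVec, Pi.single_apply, Finset.sum_ite_eq,
          Finset.sum_ite_eq'] using this
      rw [Matrix.sub_apply, Complex.le_def] at h0
      constructor
      · have := h0.2; simpa [Jmat] using this.symm
      · have := h0.1; simp [Jmat] at this; linarith
    have hbdd : BddAbove (Set.range fun i : Fin n => (B i i).re) :=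
      Set.Finite.bddAbove (Set.finite_range _)
    have hr1 : (1 : ℝ) ≤ r := by
      rw [hr]
      exact le_trans (hdiag (Classical.arbitrary _)).2 (le_ciSup hbdd _)
    have hr0 : (0 : ℝ) ≤ r := le_trans zero_le_one hr1
    -- the modified matrix with constant diagonal r
    set B' : Matrix (Fin n) (Fin n) ℂ :=
      Matrix.of fun i j => if i = j then (r : ℂ) else B i j with hB'
    have hB'E : B' = B + Matrix.diagonal fun i => (r : ℂ) - B i i := by
      ext i j
      by_cases h : i = j
      · subst h; simp [hB', Matrix.diagonal_apply_eq]
      · simp [hB', h, Matrix.diagonal_apply_ne _ h]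
    have hDpos : (Matrix.diagonal fun i : Fin n => (r : ℂ) - B i i).PosSemidef := by
      have hd : ∀ i : Fin n, (0 : ℂ) ≤ (r : ℂ) - B i i := by
        intro i
        rw [Complex.le_def]
        constructor
        · simp only [Complex.zero_re, Complex.sub_re, Complex.ofReal_re]
          have h1 : (B i i).re ≤ r := hr ▸ le_ciSup hbdd i
          linarith
        · simp [Complex.sub_im, Complex.ofReal_im, (hdiag i).1]
      exact Matrix.PosSemidef.diagonal fun i => hd i
    have hB'J : (B' - Jmat n).PosSemidef := by
      have : B' - Jmat n = (B - Jmat n) + Matrix.diagonal fun i => (r : ℂ) - B i i := by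
        rw [hB'E]; abel
      rw [this]
      exact hPSD.add hDpos
    have hB'pos : B'.PosSemidef := by
      have : B' = (B' - Jmat n) + Jmat n := by abel
      rw [this]
      exact hB'J.add (posSemidef_Jmat n)
    -- the Schur multiplier
    refine ⟨fun X => Matrix.of fun i j => B' i j * X i j, ?_, isCP_schurMul hB'pos, ?_, ?_, ?_, ?_⟩
    · constructor
      · intro X Y; ext i j; simp [mul_add]
      · intro c X; ext i j; simp [Matrix.smul_apply]; ring
    · intro X i j hij
      have hne : i ≠ j := fun h => hij (Or.inl h)
      simp [hB', hne, hB i j hij]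
    · refine ⟨(r : ℂ), ?_⟩
      ext i j
      by_cases h : i = j
      · subst h; simp [hB']
      · simp [hB', h, Matrix.one_apply_ne h]
    · have heq : (fun X => (Matrix.of fun i j => B' i j * X i j) - X)
          = fun X : Matrix (Fin n) (Fin n) ℂ =>
              Matrix.of fun i j => (B' - Jmat n) i j * X i j := by
        funext X
        ext i j
        simp [Jmat, sub_mul]
      rw [heq]
      exact isCP_schurMul hB'J
    · have h1 : (Matrix.of fun i j => B' i j * (1 : Matrix (Fin n) (Fin n) ℂ) i j)
          = (r : ℂ) • (1 : Matrix (Fin n) (Fin n) ℂ) := by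
        ext i j
        by_cases h : i = j
        · subst h; simp [hB']
        · simp [hB', h, Matrix.one_apply_ne h]
      show r = opNorm (Matrix.of fun i j => B' i j * (1 : Matrix (Fin n) (Fin n) ℂ) i j)
      rw [h1]
      unfold opNorm
      haveI : Nontrivial (EuclideanSpace ℂ (Fin n)) := inferInstance
      rw [_root_.map_smul, _root_.map_one,
        norm_smul (r : ℂ) (1 : EuclideanSpace ℂ (Fin n) →L[ℂ] EuclideanSpace ℂ (Fin n)),
        ContinuousLinearMap.one_def, ContinuousLinearMap.norm_id]
      simp [Complex.norm_real, abs_of_nonneg hr0]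
end

section
/- For a graph Γ on n vertices, if φ ∈ CP₁(Mₙ) satisfies φ(Mₙ) ⊆ 𝒮_Γ and φ − id is completely positive, then the matrix A with A_{ij} = φ(E_{ij})_{ij} satisfies: A ∈ 𝒮_Γ, A − Jₙ is positive semidefinite, and max_i A_{ii} ≤ ‖φ(Iₙ)‖; hence ϑ(Γ) ≤ Ind_CP(Mₙ : 𝒮_Γ). -/
open scoped Kronecker ComplexOrder

lemma cp_pos {n : ℕ} {Φ : Matrix (Fin n) (Fin n) ℂ → Matrix (Fin n) (Fin n) ℂ}
    (h : IsCP Φ) {X : Matrix (Fin n) (Fin n) ℂ} (hX : X.PosSemidef) :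
    (Φ X).PosSemidef := by
  have hX' : (X.submatrix (Prod.snd (α := Fin 1)) Prod.snd).PosSemidef := hX.submatrix _
  have h2 := (h 1 _ hX').submatrix (fun i : Fin n => ((0 : Fin 1), i))
  convert h2 using 2
  rfl

lemma psd_diag_re {n : ℕ} {M : Matrix (Fin n) (Fin n) ℂ} (hM : M.PosSemidef) (i : Fin n) :
    0 ≤ (M i i).re := by
  have := hM.re_dotProduct_nonneg (Pi.single i 1)
  simpa [dotProduct, Matrix.mulVec_single, Pi.single_apply, Finset.sum_ite_eq'] using this

lemma diag_re_le_opNorm {n : ℕ} (A : Matrix (Fin n) (Fin n) ℂ) (i : Fin n) :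
    (A i i).re ≤ opNorm A := by
  set T := Matrix.toEuclideanCLM (𝕜 := ℂ) A with hT
  set x : EuclideanSpace ℂ (Fin n) := EuclideanSpace.single i 1 with hxdef
  have hx : ‖x‖ = 1 := by simp [hxdef]
  have hentry : (inner ℂ x (T x) : ℂ) = A i i := by
    have h1 : T x = (WithLp.equiv 2 _).symm (Matrix.toLin' A ((WithLp.equiv 2 _) x)) := by
      rfl
    rw [h1]
    rw [EuclideanSpace.inner_eq_star_dotProduct]
    have h2 : (WithLp.equiv 2 ((i : Fin n) → ℂ)) x = Pi.single i 1 := rfl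
    have h3 : ∀ y : Fin n → ℂ, ((WithLp.equiv 2 ((i : Fin n) → ℂ)).symm y).ofLp = y := fun y => rfl
    rw [h3, h2, Matrix.toLin'_apply, Matrix.mulVec_single]
    simp [dotProduct, Pi.single_apply, hxdef]
  have h2 : ‖(inner ℂ x (T x) : ℂ)‖ ≤ ‖T‖ := by
    calc ‖(inner ℂ x (T x) : ℂ)‖ ≤ ‖x‖ * ‖T x‖ := norm_inner_le_norm x (T x)
      _ ≤ ‖x‖ * (‖T‖ * ‖x‖) := by gcongr; exact T.le_opNorm x
      _ = ‖T‖ := by rw [hx]; ring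
  calc (A i i).re ≤ ‖A i i‖ := Complex.re_le_norm _
    _ = ‖(inner ℂ x (T x) : ℂ)‖ := by rw [hentry]
    _ ≤ ‖T‖ := h2

/-- The key lemma: the three structural properties of `A`. -/
lemma key_lemma {n : ℕ} (G : SimpleGraph (Fin n))
    (φ : Matrix (Fin n) (Fin n) ℂ → Matrix (Fin n) (Fin n) ℂ)
    (hlin : IsLinearMap ℂ φ) (hcp : IsCP φ)
    (hrange : ∀ X, φ X ∈ graphSystem G)
    (hdiff : IsCP (fun X => φ X - X)) :
    (Matrix.of fun i j : Fin n => φ (Matrix.single i j (1 : ℂ)) i j) ∈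
        graphSystem G ∧
    ((Matrix.of fun i j : Fin n => φ (Matrix.single i j (1 : ℂ)) i j) -
        Jmat n).PosSemidef ∧
    (∀ i : Fin n,
      ((Matrix.of fun i j : Fin n => φ (Matrix.single i j (1 : ℂ)) i j) i i).re ≤
        opNorm (φ (1 : Matrix (Fin n) (Fin n) ℂ))) := by
  set A : Matrix (Fin n) (Fin n) ℂ :=
    Matrix.of fun i j : Fin n => φ (Matrix.single i j (1 : ℂ)) i j with hA
  refine ⟨fun i j hij => hrange _ i j hij, ?_, ?_⟩
  · -- A - J PSD
    -- the "maximally entangled" PSD matrix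
    set cvec : Matrix (Fin 1) (Fin n × Fin n) ℂ :=
      Matrix.of fun _ p => if p.1 = p.2 then 1 else 0 with hcvec
    have hM : (cvec.conjTranspose * cvec).PosSemidef := Matrix.posSemidef_conjTranspose_mul_self cvec
    have hbig := hdiff n _ hM
    have hsub := hbig.submatrix (fun i : Fin n => (i, i))
    convert hsub using 1
    ext i j
    have hE : (Matrix.of fun a b : Fin n => (cvec.conjTranspose * cvec) ((i, a)) ((j, b))) =
        Matrix.single i j (1 : ℂ) := by
      ext a b
      simp only [Matrix.of_apply, Matrix.mul_apply, Matrix.conjTranspose_apply, hcvec,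
        Matrix.single, Fin.sum_univ_one]
      by_cases h1 : i = a <;> by_cases h2 : j = b <;> simp [h1, h2]
    simp only [Matrix.sub_apply, Matrix.submatrix_apply, ampl, Matrix.of_apply]
    rw [hE]
    have hJ : Jmat n i j = (cvec.conjTranspose * cvec) (i, i) (j, j) := by
      simp [Jmat, Matrix.mul_apply, Matrix.conjTranspose_apply, hcvec, Fin.sum_univ_one]
    have hAij : A i j = φ (Matrix.single i j (1 : ℂ)) i j := rfl
    rw [hAij, hJ]
  · -- diagonal bound
    intro i
    have hEeq : Matrix.single i i (1 : ℂ) =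
        Matrix.diagonal (fun j => if j = i then (1 : ℂ) else 0) := by
      ext a b
      rcases eq_or_ne a b with rfl | hab
      · simp only [Matrix.single, Matrix.of_apply, Matrix.diagonal_apply_eq, and_self]
        by_cases h : i = a
        · simp [h]
        · rw [if_neg h, if_neg (fun hh : a = i => h hh.symm)]
      · simp only [Matrix.single, Matrix.of_apply, Matrix.diagonal_apply_ne _ hab,
          ite_eq_right_iff, and_imp]
        intro h1 h2
        exact absurd (h1.symm.trans h2) hab
    have hEpsd : (Matrix.single i i (1 : ℂ)).PosSemidef := by
      rw [hEeq]
      refine Matrix.PosSemidef.diagonal ?_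
      intro j
      by_cases h : j = i <;> simp [h]
    have hCpsd : ((1 : Matrix (Fin n) (Fin n) ℂ) - Matrix.single i i 1).PosSemidef := by
      have heq : (1 : Matrix (Fin n) (Fin n) ℂ) - Matrix.single i i 1 =
          Matrix.diagonal (fun j => if j = i then (0 : ℂ) else 1) := by
        rw [hEeq]
        rw [← Matrix.diagonal_one, Matrix.diagonal_sub]
        refine congrArg Matrix.diagonal (funext fun j => ?_)
        by_cases h : j = i <;> simp [h]
      rw [heq]
      refine Matrix.PosSemidef.diagonal ?_
      intro j
      by_cases h : j = i <;> simp [h]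
    have h1 : (φ (Matrix.single i i 1)).PosSemidef := cp_pos hcp hEpsd
    have h2 : (φ ((1 : Matrix (Fin n) (Fin n) ℂ) - Matrix.single i i 1)).PosSemidef :=
      cp_pos hcp hCpsd
    have hsub : φ ((1 : Matrix (Fin n) (Fin n) ℂ) - Matrix.single i i 1) =
        φ 1 - φ (Matrix.single i i 1) := by
      have := (hlin.mk' φ).map_sub (1 : Matrix (Fin n) (Fin n) ℂ) (Matrix.single i i 1)
      simpa using this
    have hle : (A i i).re ≤ ((φ 1 : Matrix (Fin n) (Fin n) ℂ) i i).re := by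
      have := psd_diag_re (hsub ▸ h2) i
      simp only [Matrix.sub_apply, Complex.sub_re] at this
      have hAi : A i i = φ (Matrix.single i i 1) i i := rfl
      rw [hAi]; linarith
    exact hle.trans (diag_re_le_opNorm _ i)

/-- If φ ∈ CP₁(Mₙ) maps into 𝒮_Γ with φ − id completely positive, then the
matrix A_{ij} = φ(E_{ij})_{ij} lies in 𝒮_Γ, satisfies A − Jₙ ⪰ 0 and
max_i A_{ii} ≤ ‖φ(Iₙ)‖; hence ϑ(Γ) ≤ Ind_CP(Mₙ : 𝒮_Γ). -/
theorem lovaszTheta_le_indCP {n : ℕ} (hn : 0 < n) (G : SimpleGraph (Fin n))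
    (φ : Matrix (Fin n) (Fin n) ℂ → Matrix (Fin n) (Fin n) ℂ)
    (hlin : IsLinearMap ℂ φ) (hcp : IsCP φ)
    (hrange : ∀ X, φ X ∈ graphSystem G)
    (hunit : ∃ c : ℂ, φ (1 : Matrix (Fin n) (Fin n) ℂ) = c • (1 : Matrix (Fin n) (Fin n) ℂ))
    (hdiff : IsCP (fun X => φ X - X)) :
    (Matrix.of fun i j : Fin n => φ (Matrix.single i j (1 : ℂ)) i j) ∈
        graphSystem G ∧
    ((Matrix.of fun i j : Fin n => φ (Matrix.single i j (1 : ℂ)) i j) -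
        Jmat n).PosSemidef ∧
    (∀ i : Fin n,
      ((Matrix.of fun i j : Fin n => φ (Matrix.single i j (1 : ℂ)) i j) i i).re ≤
        opNorm (φ (1 : Matrix (Fin n) (Fin n) ℂ))) ∧
    lovaszTheta G ≤ indCPMn (graphSystem G) := by
  obtain ⟨k1, k2, k3⟩ := key_lemma G φ hlin hcp hrange hdiff
  refine ⟨k1, k2, k3, ?_⟩
  haveI : Nonempty (Fin n) := Fin.pos_iff_nonempty.mp hn
  -- the theta feasible set is bounded below (by 0)
  have hbdd : BddBelow {r : ℝ | ∃ B ∈ graphSystem G, (B - Jmat n).PosSemidef ∧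
      r = ⨆ i : Fin n, (B i i).re} := by
    refine ⟨1, ?_⟩
    rintro r ⟨B, _, hpsd, rfl⟩
    have i0 : Fin n := ⟨0, hn⟩
    have h1 : (1 : ℝ) ≤ (B i0 i0).re := by
      have := psd_diag_re hpsd i0
      simp only [Matrix.sub_apply, Complex.sub_re, Jmat, Matrix.of_apply, Complex.one_re] at this
      linarith
    exact h1.trans (le_ciSup (f := fun i : Fin n => (B i i).re) (Set.Finite.bddAbove (Set.finite_range _)) i0)
  -- theta ≤ each element of the CP index set
  have hmem_le : ∀ r ∈ {r : ℝ | ∃ Φ : Matrix (Fin n) (Fin n) ℂ → Matrix (Fin n) (Fin n) ℂ,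
      IsLinearMap ℂ Φ ∧ IsCP Φ ∧ (∀ X, Φ X ∈ graphSystem G) ∧
      (∃ c : ℂ, Φ (1 : Matrix (Fin n) (Fin n) ℂ) = c • (1 : Matrix (Fin n) (Fin n) ℂ)) ∧
      IsCP (fun X => Φ X - X) ∧
      r = opNorm (Φ (1 : Matrix (Fin n) (Fin n) ℂ))}, lovaszTheta G ≤ r := by
    rintro r ⟨Φ, hl, hc, hr, _, hd, rfl⟩
    obtain ⟨m1, m2, m3⟩ := key_lemma G Φ hl hc hr hd
    set B : Matrix (Fin n) (Fin n) ℂ :=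
      Matrix.of fun i j : Fin n => Φ (Matrix.single i j (1 : ℂ)) i j
    have hmem : (⨆ i : Fin n, (B i i).re) ∈ {r : ℝ | ∃ B ∈ graphSystem G,
        (B - Jmat n).PosSemidef ∧ r = ⨆ i : Fin n, (B i i).re} := ⟨B, m1, m2, rfl⟩
    refine (csInf_le hbdd hmem).trans ?_
    exact ciSup_le fun i => m3 i
  have hne : {r : ℝ | ∃ Φ : Matrix (Fin n) (Fin n) ℂ → Matrix (Fin n) (Fin n) ℂ,
      IsLinearMap ℂ Φ ∧ IsCP Φ ∧ (∀ X, Φ X ∈ graphSystem G) ∧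
      (∃ c : ℂ, Φ (1 : Matrix (Fin n) (Fin n) ℂ) = c • (1 : Matrix (Fin n) (Fin n) ℂ)) ∧
      IsCP (fun X => Φ X - X) ∧
      r = opNorm (Φ (1 : Matrix (Fin n) (Fin n) ℂ))}.Nonempty :=
    ⟨_, φ, hlin, hcp, hrange, hunit, hdiff, rfl⟩
  exact le_csInf hne hmem_le
end
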